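/- (Explicit solitary-wave solution: m = 1 limit of the semi-trivial solution (4.3).) Let c, d, σ ∈ ℝ and λ > 0, and define sech t = 1/cosh t, η(ξ) = −1, w(ξ) = σ(1 − 4dλ²) + 12dλ²σ·sech²(λξ). Then (η, w) satisfies, for all ξ ∈ ℝ, the traveling-wave ODE system of the abcd-system with a = b = 0: −σ·η′(ξ) + w′(ξ) + (η·w)′(ξ) = 0 and −σ·w′(ξ) + η′(ξ) + w(ξ)·w′(ξ) + c·η‴(ξ) + d·σ·w‴(ξ) = 0. -/

import Mathlib

section Aux

variable (lam : ℝ)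

private lemma aux_hT (ξ : ℝ) :
    HasDerivAt (fun x : ℝ => Real.tanh (lam * x))
      (lam * (1 - Real.tanh (lam * ξ) ^ 2)) ξ := by
  have hc : Real.cosh (lam * ξ) ≠ 0 := (Real.cosh_pos (x := lam * ξ)).ne'
  have h1 : HasDerivAt Real.tanh (1 - Real.tanh (lam * ξ) ^ 2) (lam * ξ) := by
    have hd := (Real.hasDerivAt_sinh (lam * ξ)).div (Real.hasDerivAt_cosh (lam * ξ)) hc
    have heq : Real.tanh = fun x => Real.sinh x / Real.cosh x := by
      funext x; exact Real.tanh_eq_sinh_div_cosh x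
    rw [heq]
    refine hd.congr_deriv ?_
    have h := Real.cosh_sq_sub_sinh_sq (lam * ξ)
    beta_reduce
    field_simp
  have h2 : HasDerivAt (fun x : ℝ => lam * x) lam ξ := by
    simpa using (hasDerivAt_id ξ).const_mul lam
  exact (h1.comp ξ h2).congr_deriv (mul_comm _ _)

end Aux

/-- the explicit solitary wave obtained as the `m = 1` limit of the
semi-trivial solution (4.3), `η ≡ -1` and `w = σ(1 - 4dλ²) + 12dλ²σ·sech²(λξ)`,
solves the traveling-wave ODE system of the abcd-system with `a = b = 0`. -/
theorem abcd_solitary_wave_from_4_3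
    (c d σ lam : ℝ) (hlam : 0 < lam)
    (η w : ℝ → ℝ)
    (hη : ∀ ξ : ℝ, η ξ = -1)
    (hw : ∀ ξ : ℝ, w ξ = σ*(1 - 4*d*lam^2)
        + 12*d*lam^2*σ * (1 / Real.cosh (lam * ξ)) ^ 2) :
    ∀ ξ : ℝ,
      (-σ * deriv η ξ + deriv w ξ + deriv (fun x => η x * w x) ξ = 0) ∧
      (-σ * deriv w ξ + deriv η ξ + w ξ * deriv w ξ
        + c * deriv (deriv (deriv η)) ξ + d * σ * deriv (deriv (deriv w)) ξ = 0) := by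
  set B : ℝ := 12*d*lam^2*σ with hB
  set T : ℝ → ℝ := fun x => Real.tanh (lam * x) with hTdef
  -- rewrite w in terms of tanh
  have hwf : w = fun ξ => σ*(1 - 4*d*lam^2) + B * (1 - T ξ ^ 2) := by
    funext ξ
    rw [hw ξ]
    have hc : Real.cosh (lam * ξ) ≠ 0 := (Real.cosh_pos (x := lam * ξ)).ne'
    have h := Real.cosh_sq_sub_sinh_sq (lam * ξ)
    simp only [hTdef, Real.tanh_eq_sinh_div_cosh]
    field_simp
    rw [h]; ring
  have hηf : η = fun _ => (-1 : ℝ) := funext hη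
  subst hwf hηf
  -- derivative facts
  have hT : ∀ ξ : ℝ, HasDerivAt T (lam * (1 - T ξ ^ 2)) ξ := aux_hT lam
  have hW : ∀ ξ : ℝ, HasDerivAt (fun ξ => σ*(1 - 4*d*lam^2) + B * (1 - T ξ ^ 2))
      (-2*B*lam*(T ξ - T ξ^3)) ξ := by
    intro ξ
    have h := (((hT ξ).pow 2).const_sub 1).const_mul B |>.const_add (σ*(1 - 4*d*lam^2))
    exact h.congr_deriv (by ring)
  have hdW : deriv (fun ξ => σ*(1 - 4*d*lam^2) + B * (1 - T ξ ^ 2))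
      = fun ξ => -2*B*lam*(T ξ - T ξ^3) := funext fun ξ => (hW ξ).deriv
  have hW2 : ∀ ξ : ℝ, HasDerivAt (fun ξ => -2*B*lam*(T ξ - T ξ^3))
      (-2*B*lam^2*(1 - T ξ^2)*(1 - 3*T ξ^2)) ξ := by
    intro ξ
    have h := ((hT ξ).sub ((hT ξ).pow 3)).const_mul (-2*B*lam)
    exact h.congr_deriv (by ring)
  have hdW2 : deriv (fun ξ => -2*B*lam*(T ξ - T ξ^3))
      = fun ξ => -2*B*lam^2*(1 - T ξ^2)*(1 - 3*T ξ^2) := funext fun ξ => (hW2 ξ).deriv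
  have hW3 : ∀ ξ : ℝ, HasDerivAt (fun ξ => -2*B*lam^2*(1 - T ξ^2)*(1 - 3*T ξ^2))
      (-2*B*lam^3*(1 - T ξ^2)*(T ξ)*(-8 + 12*T ξ^2)) ξ := by
    intro ξ
    have h := ((((hT ξ).pow 2).const_sub 1).const_mul (-2*B*lam^2)).mul
      (((hT ξ).pow 2).const_mul 3 |>.const_sub 1)
    exact h.congr_deriv (by simp only [Pi.pow_apply]; ring)
  -- derivative of constants
  have hη1 : deriv (fun _ : ℝ => (-1 : ℝ)) = fun _ => (0:ℝ) := by
    funext x; simp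
  intro ξ
  have hprod : deriv (fun x => (fun _ : ℝ => (-1:ℝ)) x * (σ*(1 - 4*d*lam^2) + B * (1 - T x ^ 2))) ξ
      = -(-2*B*lam*(T ξ - T ξ^3)) := by
    have h := ((hW ξ).const_mul (-1 : ℝ))
    have : deriv (fun x => -1 * (σ*(1 - 4*d*lam^2) + B * (1 - T x ^ 2))) ξ
        = -1 * (-2*B*lam*(T ξ - T ξ^3)) := h.deriv
    simpa using this
  constructor
  · rw [hη1, hdW, hprod]; simp
  · rw [hη1, hdW, hdW2]
    have h3 : deriv (fun ξ => -2*B*lam^2*(1 - T ξ^2)*(1 - 3*T ξ^2)) ξ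
        = -2*B*lam^3*(1 - T ξ^2)*(T ξ)*(-8 + 12*T ξ^2) := (hW3 ξ).deriv
    rw [h3]
    have hz : deriv (deriv (fun _ : ℝ => (0:ℝ))) ξ = 0 := by simp
    rw [hz]
    simp only [hB]
    ring
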